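/- Let T* > 0 and C > 0, and let d : [0, T*] × [0, ∞) → [0, ∞) be a bounded measurable function satisfying d(t,x) ≤ C ∫₀ᵗ ∫₀^{t−s+x} d(s,v) dv ds for all (t,x) ∈ [0,T*] × [0,∞). Then d(t,x) = 0 for all (t,x) ∈ [0,T*] × [0,∞). -/

import Mathlib

open MeasureTheory

/-- A Gronwall-type lemma: a bounded nonnegative measurable function `d` on
`[0,T*] × [0,∞)` satisfying `d(t,x) ≤ C ∫₀ᵗ ∫₀^{t−s+x} d(s,v) dv ds` vanishes
identically. -/
theorem gronwall_two_variables (T C : ℝ) (hT : 0 < T) (hC : 0 < C)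
    (d : ℝ → ℝ → ℝ) (hmeas : Measurable (Function.uncurry d))
    (hnonneg : ∀ t ∈ Set.Icc 0 T, ∀ x ∈ Set.Ici (0 : ℝ), 0 ≤ d t x)
    (hbdd : ∃ M : ℝ, ∀ t ∈ Set.Icc 0 T, ∀ x ∈ Set.Ici (0 : ℝ), d t x ≤ M)
    (hineq : ∀ t ∈ Set.Icc 0 T, ∀ x ∈ Set.Ici (0 : ℝ),
      d t x ≤ C * ∫ s in (0 : ℝ)..t, ∫ v in (0 : ℝ)..(t - s + x), d s v) :
    ∀ t ∈ Set.Icc 0 T, ∀ x ∈ Set.Ici (0 : ℝ), d t x = 0 := by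
  obtain ⟨M₀, hM₀⟩ := hbdd
  set M : ℝ := max M₀ 0 with hMdef
  have hM : 0 ≤ M := le_max_right _ _
  have hdM : ∀ t ∈ Set.Icc 0 T, ∀ x ∈ Set.Ici (0 : ℝ), d t x ≤ M := fun t ht x hx =>
    (hM₀ t ht x hx).trans (le_max_left _ _)
  -- Key iterated bound
  have key : ∀ n : ℕ, ∀ u : ℝ, ∀ t ∈ Set.Icc 0 T, ∀ x ∈ Set.Ici (0 : ℝ), t + x ≤ u →
      d t x ≤ M * (C * u) ^ n * t ^ n / n.factorial := by
    intro n
    induction n with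
    | zero => intro u t ht x hx _; simpa using hdM t ht x hx
    | succ n ih =>
      intro u t ht x hx hu
      have ht0 : (0 : ℝ) ≤ t := ht.1
      have hx0 : (0 : ℝ) ≤ x := hx
      have hu0 : (0 : ℝ) ≤ u := le_trans (add_nonneg ht0 hx0) hu
      -- the inner integral, written as a set integral
      set g' : ℝ → ℝ := fun s => ∫ v, (Set.Ioc (0 : ℝ) (t - s + x)).indicator (d s) v
        with hg'def
      have hgg' : Set.EqOn (fun s => ∫ v in (0 : ℝ)..(t - s + x), d s v) g'
          (Set.uIcc (0 : ℝ) t) := by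
        intro s hs
        rw [Set.uIcc_of_le ht0] at hs
        have hL0 : 0 ≤ t - s + x := by have := hs.2; linarith
        show (∫ v in (0 : ℝ)..(t - s + x), d s v) = _
        rw [intervalIntegral.integral_of_le hL0, hg'def,
          ← integral_indicator measurableSet_Ioc]
      -- pointwise bound on the inner integral
      have hK : ∀ s ∈ Set.Icc (0 : ℝ) t,
          (∫ v in (0 : ℝ)..(t - s + x), d s v) ≤
            M * (C * u) ^ n * u / n.factorial * s ^ n := by
        intro s hs
        set K : ℝ := M * (C * u) ^ n * s ^ n / n.factorial with hKdef
        have hKnn : 0 ≤ K := by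
          apply div_nonneg _ (Nat.cast_nonneg _)
          exact mul_nonneg (mul_nonneg hM (pow_nonneg (mul_nonneg hC.le hu0) n))
            (pow_nonneg hs.1 n)
        have hL0 : 0 ≤ t - s + x := by have := hs.2; linarith
        have hLu : t - s + x ≤ u := by have := hs.1; linarith
        have hbound : ∀ v ∈ Set.uIoc (0 : ℝ) (t - s + x), ‖d s v‖ ≤ K := by
          intro v hv
          rw [Set.uIoc_of_le hL0] at hv
          have hv0 : (0 : ℝ) ≤ v := hv.1.le
          have hsT : s ∈ Set.Icc (0 : ℝ) T := ⟨hs.1, hs.2.trans ht.2⟩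
          have hsv : s + v ≤ u := by have := hv.2; linarith
          rw [Real.norm_eq_abs, abs_of_nonneg (hnonneg s hsT v hv0)]
          exact ih u s hsT v hv0 hsv
        calc (∫ v in (0 : ℝ)..(t - s + x), d s v)
            ≤ ‖∫ v in (0 : ℝ)..(t - s + x), d s v‖ := le_abs_self _
          _ ≤ K * |t - s + x - 0| :=
              intervalIntegral.norm_integral_le_of_norm_le_const hbound
          _ = K * (t - s + x) := by rw [sub_zero, abs_of_nonneg hL0]
          _ ≤ K * u := mul_le_mul_of_nonneg_left hLu hKnn
          _ = M * (C * u) ^ n * u / n.factorial * s ^ n := by rw [hKdef]; ring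
      -- measurability of g'
      have hg'meas : Measurable g' := by
        have h1 : Measurable fun p : ℝ × ℝ =>
            (Set.Ioc (0 : ℝ) (t - p.1 + x)).indicator (d p.1) p.2 := by
          have heq : ∀ p : ℝ × ℝ, (Set.Ioc (0 : ℝ) (t - p.1 + x)).indicator (d p.1) p.2 =
              if 0 < p.2 ∧ p.2 ≤ t - p.1 + x then Function.uncurry d p else 0 := by
            intro p
            simp only [Set.indicator_apply, Set.mem_Ioc]
            rfl
          simp only [heq]
          apply Measurable.ite _ hmeas measurable_const
          exact (measurableSet_lt measurable_const measurable_snd).inter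
            (measurableSet_le measurable_snd (by fun_prop))
        exact h1.stronglyMeasurable.integral_prod_right'.measurable
      -- integrability of g' on [0, t]
      have hg'int : IntervalIntegrable g' volume 0 t := by
        rw [intervalIntegrable_iff_integrableOn_Ioc_of_le ht0]
        apply Integrable.mono' (g := fun _ => M * u)
          (integrableOn_const measure_Ioc_lt_top.ne)
          hg'meas.aestronglyMeasurable.restrict
        filter_upwards [ae_restrict_mem measurableSet_Ioc] with s hs
        have hs' : s ∈ Set.Icc (0 : ℝ) t := ⟨hs.1.le, hs.2⟩
        have hL0 : 0 ≤ t - s + x := by have := hs'.2; linarith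
        have hLu : t - s + x ≤ u := by have := hs'.1; linarith
        rw [← hgg' (by rw [Set.uIcc_of_le ht0]; exact hs')]
        have hb : ∀ v ∈ Set.uIoc (0 : ℝ) (t - s + x), ‖d s v‖ ≤ M := by
          intro v hv
          rw [Set.uIoc_of_le hL0] at hv
          have hsT : s ∈ Set.Icc (0 : ℝ) T := ⟨hs'.1, hs'.2.trans ht.2⟩
          rw [Real.norm_eq_abs, abs_of_nonneg (hnonneg s hsT v hv.1.le)]
          exact hdM s hsT v hv.1.le
        calc ‖∫ v in (0 : ℝ)..(t - s + x), d s v‖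
            ≤ M * |t - s + x - 0| := intervalIntegral.norm_integral_le_of_norm_le_const hb
          _ = M * (t - s + x) := by rw [sub_zero, abs_of_nonneg hL0]
          _ ≤ M * u := mul_le_mul_of_nonneg_left hLu hM
      -- the polynomial bound is integrable
      set B : ℝ → ℝ := fun s => M * (C * u) ^ n * u / n.factorial * s ^ n with hBdef
      have hBint : IntervalIntegrable B volume 0 t :=
        ((continuous_const.mul (continuous_pow n)).intervalIntegrable 0 t)
      have hK' : ∀ s ∈ Set.Icc (0 : ℝ) t, g' s ≤ B s := by
        intro s hs
        rw [← hgg' (by rw [Set.uIcc_of_le ht0]; exact hs)]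
        exact hK s hs
      have hfac : ((n.factorial : ℝ)) ≠ 0 := Nat.cast_ne_zero.2 n.factorial_ne_zero
      have hnn1 : ((n : ℝ) + 1) ≠ 0 := by positivity
      calc d t x ≤ C * ∫ s in (0 : ℝ)..t, ∫ v in (0 : ℝ)..(t - s + x), d s v :=
            hineq t ht x hx
        _ = C * ∫ s in (0 : ℝ)..t, g' s := by rw [intervalIntegral.integral_congr hgg']
        _ ≤ C * ∫ s in (0 : ℝ)..t, B s := by
            apply mul_le_mul_of_nonneg_left _ hC.le
            exact intervalIntegral.integral_mono_on ht0 hg'int hBint hK'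
        _ = C * (M * (C * u) ^ n * u / n.factorial * ((t ^ (n + 1) - 0 ^ (n + 1)) / (n + 1))) := by
            rw [hBdef, intervalIntegral.integral_const_mul, integral_pow]
        _ = M * (C * u) ^ (n + 1) * t ^ (n + 1) / (n + 1).factorial := by
            rw [Nat.factorial_succ, pow_succ]
            push_cast
            rw [zero_pow (Nat.succ_ne_zero n)]
            field_simp
            ring
  -- conclude
  intro t ht x hx
  have hlim : Filter.Tendsto (fun n : ℕ => M * ((C * (t + x) * t) ^ n / n.factorial))
      Filter.atTop (nhds 0) := by
    simpa using (FloorSemiring.tendsto_pow_div_factorial_atTop (C * (t + x) * t)).const_mul M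
  have hle : ∀ n : ℕ, d t x ≤ M * ((C * (t + x) * t) ^ n / n.factorial) := by
    intro n
    have h := key n (t + x) t ht x hx le_rfl
    calc d t x ≤ M * (C * (t + x)) ^ n * t ^ n / n.factorial := h
      _ = M * ((C * (t + x) * t) ^ n / n.factorial) := by
          generalize C * (t + x) = a
          rw [mul_pow]; ring
  have h0 : d t x ≤ 0 := ge_of_tendsto hlim (Filter.Eventually.of_forall hle)
  exact le_antisymm h0 (hnonneg t ht x hx)
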